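/- Let d ≥ 2 be a natural number, let r₀ > 0, R > 0 and ε ∈ (0,1] be real numbers with ε^d ≤ R, and let ρ : [−r₀, R] → ℝ be a continuous function with ε ≤ ρ(s) ≤ 1 for all s ∈ [−r₀,R] and ρ(s) = ε for all s ∈ [ε^d, R]. Then every continuously differentiable function u : [−r₀,R] → ℂ with u(−r₀) = 0 satisfies ∫_0^R |u(s)|² ρ(s)^d ds ≤ (1+R)·(R+r₀)·ε² · ∫_{−r₀}^R |u'(s)|² ρ(s)^{d−2} ds. -/

import Mathlib

open MeasureTheory intervalIntegral Set

/-- Cauchy–Schwarz for interval integrals of nonnegative continuous functions. -/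
lemma cs_interval {f : ℝ → ℝ} {a b : ℝ} (hab : a ≤ b)
    (hf : ContinuousOn f (Set.Icc a b)) (hf0 : ∀ x ∈ Set.Icc a b, 0 ≤ f x) :
    (∫ x in a..b, f x) ^ 2 ≤ (b - a) * ∫ x in a..b, f x ^ 2 := by
  set μ := volume.restrict (Set.Icc a b) with hμ
  haveI : IsFiniteMeasure μ := by
    constructor
    rw [hμ, Measure.restrict_apply_univ, Real.volume_Icc]
    exact ENNReal.ofReal_lt_top
  have hmeas : AEStronglyMeasurable f μ :=
    hf.aestronglyMeasurable measurableSet_Icc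
  obtain ⟨C, hC⟩ := isCompact_Icc.exists_bound_of_continuousOn hf
  have hmem : MemLp f (ENNReal.ofReal 2) μ :=
    MemLp.of_bound hmeas C
      ((ae_restrict_iff' measurableSet_Icc).2 (Filter.Eventually.of_forall hC))
  have hgmem : MemLp (fun _ : ℝ => (1 : ℝ)) (ENNReal.ofReal 2) μ := memLp_const 1
  have hpq : Real.HolderConjugate 2 2 := Real.HolderConjugate.two_two
  have hf0' : 0 ≤ᵐ[μ] f :=
    (ae_restrict_iff' measurableSet_Icc).2 (Filter.Eventually.of_forall hf0)
  have holder := integral_mul_le_Lp_mul_Lq_of_nonneg hpq hf0'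
    (Filter.Eventually.of_forall fun _ => zero_le_one) hmem hgmem
  simp only [mul_one] at holder
  have h2 : ∀ x : ℝ, f x ^ (2 : ℝ) = f x ^ 2 := fun x => by
    rw [show (2 : ℝ) = ((2 : ℕ) : ℝ) by norm_num, Real.rpow_natCast]
  have hone : ∫ x, (1 : ℝ) ^ (2 : ℝ) ∂μ = b - a := by
    simp only [Real.one_rpow]
    rw [hμ, MeasureTheory.integral_const, measureReal_def, Measure.restrict_apply_univ, Real.volume_Icc,
      smul_eq_mul, mul_one, ENNReal.toReal_ofReal (by linarith)]
  rw [hone] at holder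
  simp only [h2] at holder
  have hX : 0 ≤ ∫ x, f x ^ 2 ∂μ := integral_nonneg fun x => sq_nonneg _
  have hI : (∫ x, f x ∂μ) = ∫ x in a..b, f x := by
    rw [intervalIntegral.integral_of_le hab, hμ, ← integral_Icc_eq_integral_Ioc]
  have hI2 : (∫ x, f x ^ 2 ∂μ) = ∫ x in a..b, f x ^ 2 := by
    rw [intervalIntegral.integral_of_le hab, hμ, ← integral_Icc_eq_integral_Ioc]
  have hnn : 0 ≤ ∫ x, f x ∂μ := integral_nonneg_of_ae hf0'
  have hsq : (∫ x, f x ∂μ) ^ 2 ≤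
      ((∫ x, f x ^ 2 ∂μ) ^ (1 / (2:ℝ)) * (b - a) ^ (1 / (2:ℝ))) ^ 2 :=
    pow_le_pow_left₀ hnn holder 2
  have hrw : ((∫ x, f x ^ 2 ∂μ) ^ (1 / (2:ℝ)) * (b - a) ^ (1 / (2:ℝ))) ^ 2 =
      (b - a) * ∫ x, f x ^ 2 ∂μ := by
    rw [mul_pow, ← Real.rpow_natCast ((∫ x, f x ^ 2 ∂μ) ^ (1 / (2:ℝ))) 2,
      ← Real.rpow_natCast ((b - a) ^ (1 / (2:ℝ))) 2,
      ← Real.rpow_mul hX, ← Real.rpow_mul (by linarith : (0:ℝ) ≤ b - a)]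
    norm_num
    ring
  rw [hrw] at hsq
  rw [← hI, ← hI2]
  exact hsq

theorem non_concentration_conformal
    (d : ℕ) (hd : 2 ≤ d) (r₀ R ε : ℝ) (hr₀ : 0 < r₀) (hR : 0 < R)
    (hε0 : 0 < ε) (hε1 : ε ≤ 1) (hεR : ε ^ d ≤ R)
    (ρ : ℝ → ℝ) (hρ : ContinuousOn ρ (Set.Icc (-r₀) R))
    (hρlow : ∀ s ∈ Set.Icc (-r₀) R, ε ≤ ρ s)
    (hρup : ∀ s ∈ Set.Icc (-r₀) R, ρ s ≤ 1)
    (hρε : ∀ s ∈ Set.Icc (ε ^ d) R, ρ s = ε)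
    (u u' : ℝ → ℂ)
    (hu : ∀ s ∈ Set.Icc (-r₀) R, HasDerivWithinAt u (u' s) (Set.Icc (-r₀) R) s)
    (hu' : ContinuousOn u' (Set.Icc (-r₀) R))
    (hua : u (-r₀) = 0) :
    ∫ s in (0 : ℝ)..R, ‖u s‖ ^ 2 * ρ s ^ d ≤
      (1 + R) * (R + r₀) * ε ^ 2 *
        ∫ s in (-r₀)..R, ‖u' s‖ ^ 2 * ρ s ^ (d - 2) := by
  have ha0 : -r₀ ≤ 0 := by linarith
  have haR : -r₀ ≤ R := by linarith
  have hεd0 : (0:ℝ) < ε ^ d := pow_pos hε0 d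
  have hcu : ContinuousOn u (Set.Icc (-r₀) R) := fun s hs => (hu s hs).continuousWithinAt
  have hftc : ∀ s ∈ Set.Icc (-r₀) R, u s = ∫ t in (-r₀)..s, u' t := by
    intro s hs
    have h1 : ∫ t in (-r₀)..s, u' t = u s - u (-r₀) :=
      intervalIntegral.integral_eq_sub_of_hasDeriv_right_of_le hs.1
        (hcu.mono (Set.Icc_subset_Icc le_rfl hs.2))
        (fun x hx => ((hu x ⟨hx.1.le, hx.2.le.trans hs.2⟩).hasDerivAt
          (Icc_mem_nhds hx.1 (lt_of_lt_of_le hx.2 hs.2))).hasDerivWithinAt)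
        (by
          apply ContinuousOn.intervalIntegrable
          rw [Set.uIcc_of_le hs.1]
          exact hu'.mono (Set.Icc_subset_Icc le_rfl hs.2))
    rw [h1, hua, sub_zero]
  set M := ∫ t in (-r₀)..R, ‖u' t‖ ^ 2 with hM
  have hM0 : 0 ≤ M := intervalIntegral.integral_nonneg haR (fun t _ => sq_nonneg _)
  have hcn : ContinuousOn (fun t => ‖u' t‖ ^ 2) (Set.Icc (-r₀) R) := hu'.norm.pow 2
  have key : ∀ s ∈ Set.Icc (-r₀) R, ‖u s‖ ^ 2 ≤ (R + r₀) * M := by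
    intro s hs
    have hnorm : ‖u s‖ ≤ ∫ t in (-r₀)..s, ‖u' t‖ := by
      rw [hftc s hs]
      exact intervalIntegral.norm_integral_le_integral_norm hs.1
    have hcs : (∫ t in (-r₀)..s, ‖u' t‖) ^ 2 ≤ (s - (-r₀)) * ∫ t in (-r₀)..s, ‖u' t‖ ^ 2 :=
      cs_interval hs.1 ((hu'.mono (Set.Icc_subset_Icc le_rfl hs.2)).norm)
        (fun x _ => norm_nonneg _)
    have hmono : ∫ t in (-r₀)..s, ‖u' t‖ ^ 2 ≤ M := by
      apply intervalIntegral.integral_mono_interval le_rfl hs.1 hs.2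
      · exact Filter.Eventually.of_forall fun t => sq_nonneg _
      · apply ContinuousOn.intervalIntegrable
        rw [Set.uIcc_of_le haR]
        exact hcn
    have h2 : ‖u s‖ ^ 2 ≤ (∫ t in (-r₀)..s, ‖u' t‖) ^ 2 :=
      pow_le_pow_left₀ (norm_nonneg _) hnorm 2
    have hint0 : 0 ≤ ∫ t in (-r₀)..s, ‖u' t‖ ^ 2 :=
      intervalIntegral.integral_nonneg hs.1 fun t _ => sq_nonneg _
    calc ‖u s‖ ^ 2 ≤ (s - (-r₀)) * ∫ t in (-r₀)..s, ‖u' t‖ ^ 2 := h2.trans hcs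
      _ ≤ (R + r₀) * M :=
          mul_le_mul (by linarith [hs.2]) hmono hint0 (by linarith)
  -- continuity and integrability of the left integrand
  have hcf : ContinuousOn (fun s => ‖u s‖ ^ 2 * ρ s ^ d) (Set.Icc (-r₀) R) :=
    (hcu.norm.pow 2).mul (hρ.pow d)
  have hint1 : IntervalIntegrable (fun s => ‖u s‖ ^ 2 * ρ s ^ d) volume 0 (ε ^ d) := by
    apply ContinuousOn.intervalIntegrable
    exact hcf.mono (by rw [Set.uIcc_of_le hεd0.le]; exact Set.Icc_subset_Icc ha0 hεR)
  have hint2 : IntervalIntegrable (fun s => ‖u s‖ ^ 2 * ρ s ^ d) volume (ε ^ d) R := by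
    apply ContinuousOn.intervalIntegrable
    exact hcf.mono (by rw [Set.uIcc_of_le hεR]; exact Set.Icc_subset_Icc (by linarith) le_rfl)
  have hsplit : ∫ s in (0:ℝ)..R, ‖u s‖ ^ 2 * ρ s ^ d =
      (∫ s in (0:ℝ)..(ε ^ d), ‖u s‖ ^ 2 * ρ s ^ d) +
        ∫ s in (ε ^ d)..R, ‖u s‖ ^ 2 * ρ s ^ d :=
    (intervalIntegral.integral_add_adjacent_intervals hint1 hint2).symm
  -- bound on the first piece
  have hb1 : (∫ s in (0:ℝ)..(ε ^ d), ‖u s‖ ^ 2 * ρ s ^ d) ≤ ε ^ d * ((R + r₀) * M) := by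
    have := intervalIntegral.integral_mono_on hεd0.le hint1
      (_root_.intervalIntegrable_const (c := (R + r₀) * M)) (fun x hx => by
        have hxI : x ∈ Set.Icc (-r₀) R := ⟨by linarith [hx.1], hx.2.trans hεR⟩
        have h1 : ρ x ^ d ≤ 1 :=
          pow_le_one₀ (le_trans hε0.le (hρlow x hxI)) (hρup x hxI)
        have h2 : (0:ℝ) ≤ ‖u x‖ ^ 2 := sq_nonneg _
        calc ‖u x‖ ^ 2 * ρ x ^ d ≤ ‖u x‖ ^ 2 * 1 :=
              mul_le_mul_of_nonneg_left h1 h2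
          _ = ‖u x‖ ^ 2 := mul_one _
          _ ≤ (R + r₀) * M := key x hxI)
    rw [intervalIntegral.integral_const, smul_eq_mul, sub_zero] at this
    exact this
  -- bound on the second piece
  have hb2 : (∫ s in (ε ^ d)..R, ‖u s‖ ^ 2 * ρ s ^ d) ≤ R * (ε ^ d * ((R + r₀) * M)) := by
    have hstep := intervalIntegral.integral_mono_on hεR hint2
      (_root_.intervalIntegrable_const (c := ε ^ d * ((R + r₀) * M))) (fun x hx => by
        have hxI : x ∈ Set.Icc (-r₀) R := ⟨by linarith [hx.1, hεd0], hx.2⟩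
        have hρx : ρ x = ε := hρε x hx
        rw [hρx]
        calc ‖u x‖ ^ 2 * ε ^ d ≤ ((R + r₀) * M) * ε ^ d :=
              mul_le_mul_of_nonneg_right (key x hxI) hεd0.le
          _ = ε ^ d * ((R + r₀) * M) := by ring)
    rw [intervalIntegral.integral_const, smul_eq_mul] at hstep
    have hC : 0 ≤ ε ^ d * ((R + r₀) * M) := by positivity
    calc (∫ s in (ε ^ d)..R, ‖u s‖ ^ 2 * ρ s ^ d)
        ≤ (R - ε ^ d) * (ε ^ d * ((R + r₀) * M)) := hstep
      _ ≤ R * (ε ^ d * ((R + r₀) * M)) := by nlinarith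
  -- lower bound on the right-hand integral
  have hE : ε ^ (d - 2) * M ≤ ∫ s in (-r₀)..R, ‖u' s‖ ^ 2 * ρ s ^ (d - 2) := by
    have heq : ε ^ (d - 2) * M = ∫ s in (-r₀)..R, ε ^ (d - 2) * ‖u' s‖ ^ 2 := by
      rw [hM, ← intervalIntegral.integral_const_mul]
    rw [heq]
    apply intervalIntegral.integral_mono_on haR
    · apply ContinuousOn.intervalIntegrable
      rw [Set.uIcc_of_le haR]
      exact continuousOn_const.mul hcn
    · apply ContinuousOn.intervalIntegrable
      rw [Set.uIcc_of_le haR]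
      exact hcn.mul (hρ.pow (d - 2))
    · intro x hx
      have h1 : ε ^ (d - 2) ≤ ρ x ^ (d - 2) :=
        pow_le_pow_left₀ hε0.le (hρlow x hx) (d - 2)
      calc ε ^ (d - 2) * ‖u' x‖ ^ 2 ≤ ρ x ^ (d - 2) * ‖u' x‖ ^ 2 :=
            mul_le_mul_of_nonneg_right h1 (sq_nonneg _)
        _ = ‖u' x‖ ^ 2 * ρ x ^ (d - 2) := mul_comm _ _
  have hεpow : ε ^ d = ε ^ 2 * ε ^ (d - 2) := by
    rw [← pow_add]
    congr 1
    omega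
  have hc : (0:ℝ) ≤ (1 + R) * (R + r₀) * ε ^ 2 := by positivity
  calc ∫ s in (0:ℝ)..R, ‖u s‖ ^ 2 * ρ s ^ d
      = (∫ s in (0:ℝ)..(ε ^ d), ‖u s‖ ^ 2 * ρ s ^ d) +
          ∫ s in (ε ^ d)..R, ‖u s‖ ^ 2 * ρ s ^ d := hsplit
    _ ≤ ε ^ d * ((R + r₀) * M) + R * (ε ^ d * ((R + r₀) * M)) := add_le_add hb1 hb2
    _ = (1 + R) * (R + r₀) * ε ^ 2 * (ε ^ (d - 2) * M) := by rw [hεpow]; ring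
    _ ≤ (1 + R) * (R + r₀) * ε ^ 2 *
          ∫ s in (-r₀)..R, ‖u' s‖ ^ 2 * ρ s ^ (d - 2) :=
        mul_le_mul_of_nonneg_left hE hc
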